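/- Let α ∈ (0,1], let (Ω, 𝓕, ℙ) be a probability space, and let R, R̃ : Ω → [0,∞] be measurable. Suppose that for every t ≥ 0, ℙ(R ≤ t) = α ∫_0^t (1 − ℙ(R̃ ≤ u)) (t − u)^{α-1} du. Then for every s > 0, E[e^{−sR}] = (Γ(1+α)/s^α) (1 − E[e^{−sR̃}]), where e^{−s·∞} := 0. -/

import Mathlib

open MeasureTheory Set
open scoped ENNReal

lemma exp_tail_integral {s : ℝ} (hs : 0 < s) (a : ℝ) :
    ∫ t in Ioi a, s * Real.exp (-(s * t)) = Real.exp (-(s * a)) := by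
  have hint : IntegrableOn (fun t => s * Real.exp (-(s * t))) (Ioi a) := by
    have := (exp_neg_integrableOn_Ioi a hs).const_mul s
    simpa [neg_mul, IntegrableOn] using this
  have hd : ∀ x ∈ Ici a, HasDerivAt (fun t => -Real.exp (-(s * t)))
      (s * Real.exp (-(s * x))) x := by
    intro x _
    have h1 : HasDerivAt (fun t : ℝ => -(s * t)) (-s) x := by
      have h0 := ((hasDerivAt_id x).const_mul s).neg
      rw [mul_one] at h0
      exact h0
    have h2 := (Real.hasDerivAt_exp (-(s * x))).comp x h1
    have := h2.neg
    have e : s * Real.exp (-(s * x)) = -(Real.exp (-(s * x)) * -s) := by ring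
    rw [e]
    exact this
  have ht : Filter.Tendsto (fun t => -Real.exp (-(s * t))) Filter.atTop (nhds 0) := by
    have h1 : Filter.Tendsto (fun t : ℝ => s * t) Filter.atTop Filter.atTop :=
      Filter.Tendsto.const_mul_atTop hs Filter.tendsto_id
    have h2 := (Real.tendsto_exp_neg_atTop_nhds_zero).comp h1
    simpa using h2.neg
  have := integral_Ioi_of_hasDerivAt_of_tendsto' hd hint ht
  simpa using this

lemma lint_exp_tail {s : ℝ} (hs : 0 < s) (a : ℝ) :
    ∫⁻ t in Ioi a, ENNReal.ofReal (s * Real.exp (-(s * t)))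
      = ENNReal.ofReal (Real.exp (-(s * a))) := by
  rw [← exp_tail_integral hs a]
  refine (ofReal_integral_eq_lintegral_ofReal ?_ ?_).symm
  · have := (exp_neg_integrableOn_Ioi a hs).const_mul s
    simpa [neg_mul] using this
  · filter_upwards with x
    positivity

/-- Laplace transform `E[e^{-sR}]` of a `[0,∞]`-valued random variable, with the
convention `e^{-s·∞} = 0`. -/
noncomputable def laplaceENN {Ω : Type*} [MeasurableSpace Ω] (μ : Measure Ω)
    (R : Ω → ℝ≥0∞) (s : ℝ) : ℝ :=
  ∫ ω, (if R ω = ⊤ then 0 else Real.exp (-s * (R ω).toReal)) ∂μ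

lemma laplace_meas {Ω : Type*} [MeasurableSpace Ω] {R : Ω → ℝ≥0∞} (hR : Measurable R) (s : ℝ) :
    Measurable (fun ω => if R ω = ⊤ then 0 else Real.exp (-s * (R ω).toReal)) := by
  refine Measurable.ite (hR (measurableSet_singleton ⊤)) measurable_const ?_
  exact (Real.continuous_exp.measurable).comp
    ((ENNReal.measurable_toReal.comp hR).const_mul (-s))

lemma laplace_int {Ω : Type*} [MeasurableSpace Ω] (μ : Measure Ω) [IsProbabilityMeasure μ]
    {R : Ω → ℝ≥0∞} (hR : Measurable R) (s : ℝ) (hs : 0 < s) :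
    Integrable (fun ω => if R ω = ⊤ then 0 else Real.exp (-s * (R ω).toReal)) μ := by
  refine Integrable.mono' (integrable_const (1 : ℝ))
    (laplace_meas hR s).aestronglyMeasurable ?_
  filter_upwards with ω
  rw [Real.norm_eq_abs]
  split_ifs with hw
  · simp
  · rw [abs_of_pos (Real.exp_pos _)]
    apply Real.exp_le_one_iff.2
    have : 0 ≤ (R ω).toReal := ENNReal.toReal_nonneg
    nlinarith

lemma laplace_nonneg {Ω : Type*} [MeasurableSpace Ω] (μ : Measure Ω)
    (R : Ω → ℝ≥0∞) (s : ℝ) : 0 ≤ laplaceENN μ R s := by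
  apply integral_nonneg
  intro ω
  simp only [Pi.zero_apply]
  split_ifs
  · exact le_refl 0
  · exact (Real.exp_pos _).le

lemma laplace_le_one {Ω : Type*} [MeasurableSpace Ω] (μ : Measure Ω) [IsProbabilityMeasure μ]
    {R : Ω → ℝ≥0∞} (hR : Measurable R) {s : ℝ} (hs : 0 < s) : laplaceENN μ R s ≤ 1 := by
  have := integral_mono (laplace_int μ hR s hs) (integrable_const (1:ℝ))
    (g := fun _ => (1:ℝ)) ?_
  · simpa [laplaceENN] using this
  · intro ω
    dsimp only
    split_ifs with hw
    · norm_num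
    · exact Real.exp_le_one_iff.2 (by nlinarith [ENNReal.toReal_nonneg (a := R ω)])

lemma layer {Ω : Type*} [MeasurableSpace Ω] (μ : Measure Ω) [IsProbabilityMeasure μ]
    {R : Ω → ℝ≥0∞} (hR : Measurable R) {s : ℝ} (hs : 0 < s) :
    ENNReal.ofReal (laplaceENN μ R s)
      = ∫⁻ t in Ioi (0:ℝ), ENNReal.ofReal (s * Real.exp (-(s * t)))
          * μ {ω | R ω ≤ ENNReal.ofReal t} := by
  set A : Set (ℝ × Ω) := {p | R p.2 ≤ ENNReal.ofReal p.1} with hA_def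
  have hA : MeasurableSet A :=
    measurableSet_le (hR.comp measurable_snd)
      (ENNReal.measurable_ofReal.comp measurable_fst)
  set F : ℝ → Ω → ℝ≥0∞ :=
    fun t ω => A.indicator (fun p : ℝ × Ω => ENNReal.ofReal (s * Real.exp (-(s * p.1)))) (t, ω)
    with hF_def
  have hFmeas : Measurable (Function.uncurry F) := by
    have : Function.uncurry F =
        A.indicator (fun p : ℝ × Ω => ENNReal.ofReal (s * Real.exp (-(s * p.1)))) := rfl
    rw [this]
    exact Measurable.indicator
      (ENNReal.measurable_ofReal.comp
        ((Real.continuous_exp.measurable.comp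
          (measurable_fst.const_mul s).neg).const_mul s)) hA
  -- inner integral over t for fixed ω
  have hinner : ∀ ω, ∫⁻ t in Ioi (0:ℝ), F t ω
      = ENNReal.ofReal (if R ω = ⊤ then 0 else Real.exp (-s * (R ω).toReal)) := by
    intro ω
    by_cases hw : R ω = ⊤
    · have : ∀ t : ℝ, F t ω = 0 := by
        intro t
        rw [hF_def]
        apply Set.indicator_of_notMem
        simp [hA_def, hw]
      simp [this, hw]
    · set a := (R ω).toReal with ha_def
      have ha : 0 ≤ a := ENNReal.toReal_nonneg
      have hset : ∀ t : ℝ, F t ω = ({t : ℝ | R ω ≤ ENNReal.ofReal t}).indicator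
          (fun t => ENNReal.ofReal (s * Real.exp (-(s * t)))) t := by
        intro t
        by_cases hm : R ω ≤ ENNReal.ofReal t
        · show A.indicator _ (t, ω) = _
          simp only [Set.indicator_apply, hA_def, Set.mem_setOf_eq, if_pos hm]
        · show A.indicator _ (t, ω) = _
          simp only [Set.indicator_apply, hA_def, Set.mem_setOf_eq, if_neg hm]
      have hSmeas : MeasurableSet {t : ℝ | R ω ≤ ENNReal.ofReal t} :=
        measurableSet_le measurable_const ENNReal.measurable_ofReal
      calc ∫⁻ t in Ioi (0:ℝ), F t ω
          = ∫⁻ t in Ioi (0:ℝ), ({t : ℝ | R ω ≤ ENNReal.ofReal t}).indicator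
              (fun t => ENNReal.ofReal (s * Real.exp (-(s * t)))) t := by
            exact lintegral_congr fun t => hset t
        _ = ∫⁻ t in {t : ℝ | R ω ≤ ENNReal.ofReal t} ∩ Ioi (0:ℝ),
              ENNReal.ofReal (s * Real.exp (-(s * t))) := by
            rw [lintegral_indicator hSmeas, Measure.restrict_restrict hSmeas]
        _ = ∫⁻ t in Ioi a, ENNReal.ofReal (s * Real.exp (-(s * t))) := by
            apply setLIntegral_congr
            have hsub1 : Ioi a ⊆ {t : ℝ | R ω ≤ ENNReal.ofReal t} ∩ Ioi (0:ℝ) := by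
              intro t ht
              have ht' : a < t := ht
              constructor
              · exact (ENNReal.le_ofReal_iff_toReal_le hw (by linarith)).2 ht'.le
              · exact lt_of_le_of_lt ha ht'
            have hsub2 : ({t : ℝ | R ω ≤ ENNReal.ofReal t} ∩ Ioi (0:ℝ)) \ Ioi a ⊆ {a} := by
              rintro t ⟨⟨h1, h2⟩, h3⟩
              have h2' : (0:ℝ) < t := h2
              have h4 : a ≤ t := (ENNReal.le_ofReal_iff_toReal_le hw h2'.le).1 h1
              have h5 : t ≤ a := not_lt.1 h3
              simp [le_antisymm h5 h4]
            rw [Filter.eventuallyEq_set]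
            have hnull : volume (({t : ℝ | R ω ≤ ENNReal.ofReal t} ∩ Ioi (0:ℝ)) \ Ioi a) = 0 :=
              measure_mono_null hsub2 (measure_singleton a)
            have hnull2 : volume ((Ioi a) \ ({t : ℝ | R ω ≤ ENNReal.ofReal t} ∩ Ioi (0:ℝ))) = 0 := by
              rw [Set.diff_eq_empty.2 hsub1]; simp
            rw [MeasureTheory.ae_iff]
            refine measure_mono_null ?_ (measure_union_null hnull hnull2)
            intro t ht
            simp only [Set.mem_setOf_eq] at ht
            by_cases h1 : t ∈ {t : ℝ | R ω ≤ ENNReal.ofReal t} ∩ Ioi (0:ℝ)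
            · exact Or.inl ⟨h1, fun h2 => ht ⟨fun _ => h2, fun _ => h1⟩⟩
            · have h2 : t ∈ Ioi a := by tauto
              exact Or.inr ⟨h2, h1⟩
        _ = ENNReal.ofReal (Real.exp (-(s * a))) := lint_exp_tail hs a
        _ = ENNReal.ofReal (if R ω = ⊤ then 0 else Real.exp (-s * (R ω).toReal)) := by
            rw [if_neg hw, neg_mul, ha_def]
  have hOmega : ∀ t : ℝ, ∫⁻ ω, F t ω ∂μ
      = ENNReal.ofReal (s * Real.exp (-(s * t))) * μ {ω | R ω ≤ ENNReal.ofReal t} := by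
    intro t
    have hset : ∀ ω, F t ω = ({ω : Ω | R ω ≤ ENNReal.ofReal t}).indicator
        (fun _ => ENNReal.ofReal (s * Real.exp (-(s * t)))) ω := by
      intro ω
      show A.indicator _ (t, ω) = _
      by_cases hm : R ω ≤ ENNReal.ofReal t
      · simp only [Set.indicator_apply, hA_def, Set.mem_setOf_eq, if_pos hm]
      · simp only [Set.indicator_apply, hA_def, Set.mem_setOf_eq, if_neg hm]
    have hSmeas : MeasurableSet {ω : Ω | R ω ≤ ENNReal.ofReal t} :=
      hR measurableSet_Iic
    rw [lintegral_congr hset, lintegral_indicator hSmeas, setLIntegral_const]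
  have hswap : ∫⁻ ω, (∫⁻ t in Ioi (0:ℝ), F t ω) ∂μ
      = ∫⁻ t in Ioi (0:ℝ), (∫⁻ ω, F t ω ∂μ) := by
    have := lintegral_lintegral_swap (μ := μ) (ν := volume.restrict (Ioi (0:ℝ)))
      (f := fun ω t => F t ω) ?_
    · exact this
    · have : Function.uncurry (fun ω t => F t ω) = Function.uncurry F ∘ Prod.swap := rfl
      rw [this]
      exact (hFmeas.comp measurable_swap).aemeasurable
  calc ENNReal.ofReal (laplaceENN μ R s)
      = ∫⁻ ω, ENNReal.ofReal
          (if R ω = ⊤ then 0 else Real.exp (-s * (R ω).toReal)) ∂μ := by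
        refine ofReal_integral_eq_lintegral_ofReal (laplace_int μ hR s hs) ?_
        filter_upwards with ω
        split_ifs
        · exact le_refl 0
        · exact (Real.exp_pos _).le
    _ = ∫⁻ ω, (∫⁻ t in Ioi (0:ℝ), F t ω) ∂μ := by
        exact lintegral_congr fun ω => (hinner ω).symm
    _ = ∫⁻ t in Ioi (0:ℝ), (∫⁻ ω, F t ω ∂μ) := hswap
    _ = ∫⁻ t in Ioi (0:ℝ), ENNReal.ofReal (s * Real.exp (-(s * t)))
          * μ {ω | R ω ≤ ENNReal.ofReal t} := lintegral_congr fun t => hOmega t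

lemma gamma_intOn {α s : ℝ} (hα : 0 < α) (hs : 0 < s) :
    IntegrableOn (fun v : ℝ => v ^ (α - 1) * Real.exp (-(s * v))) (Ioi 0) := by
  have := integrableOn_rpow_mul_exp_neg_mul_rpow (s := α - 1) (p := 1) (b := s)
    (by linarith) zero_lt_one hs
  refine this.congr_fun (fun x hx => ?_) measurableSet_Ioi
  dsimp only
  rw [Real.rpow_one, neg_mul]

lemma lint_gamma {α s : ℝ} (hα : 0 < α) (hs : 0 < s) :
    ∫⁻ v in Ioi (0:ℝ), ENNReal.ofReal (v ^ (α - 1) * Real.exp (-(s * v)))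
      = ENNReal.ofReal ((1 / s) ^ α * Real.Gamma α) := by
  rw [← Real.integral_rpow_mul_exp_neg_mul_Ioi hα hs]
  refine (ofReal_integral_eq_lintegral_ofReal (gamma_intOn hα hs) ?_).symm
  filter_upwards [self_mem_ae_restrict measurableSet_Ioi] with x hx
  have : (0:ℝ) < x := hx
  positivity

lemma lint_shift {α s : ℝ} (hα : 0 < α) (hs : 0 < s) (u : ℝ) :
    ∫⁻ t in Ioi u, ENNReal.ofReal (Real.exp (-(s * t)) * (t - u) ^ (α - 1))
      = ENNReal.ofReal (Real.exp (-(s * u))) * ENNReal.ofReal ((1 / s) ^ α * Real.Gamma α) := by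
  have hmap : volume.restrict (Ioi u)
      = Measure.map (fun v : ℝ => v + u) (volume.restrict (Ioi (0:ℝ))) := by
    have h1 : (fun v : ℝ => v + u) ⁻¹' (Ioi u) = Ioi (0:ℝ) := by
      ext v; simp [Set.mem_preimage, lt_add_iff_pos_left]
    rw [← h1, ← Measure.restrict_map (measurable_add_const u) measurableSet_Ioi,
      map_add_right_eq_self volume u]
  have hfm : Measurable (fun t : ℝ => ENNReal.ofReal (Real.exp (-(s * t)) * (t - u) ^ (α - 1))) := by
    fun_prop
  rw [hmap, lintegral_map hfm (measurable_add_const u)]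
  have hcong : ∀ v ∈ Ioi (0:ℝ),
      ENNReal.ofReal (Real.exp (-(s * (v + u))) * (v + u - u) ^ (α - 1))
        = ENNReal.ofReal (Real.exp (-(s * u)))
          * ENNReal.ofReal (v ^ (α - 1) * Real.exp (-(s * v))) := by
    intro v hv
    rw [← ENNReal.ofReal_mul (Real.exp_pos _).le]
    congr 1
    have : -(s * (v + u)) = -(s * u) + -(s * v) := by ring
    rw [this, Real.exp_add, add_sub_cancel_right]
    ring
  rw [setLIntegral_congr_fun measurableSet_Ioi hcong,
    lintegral_const_mul' _ _ ENNReal.ofReal_ne_top, lint_gamma hα hs]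

theorem stmt4 {Ω : Type*} [MeasurableSpace Ω] (μ : Measure Ω) [IsProbabilityMeasure μ]
    (α : ℝ) (hα : α ∈ Ioc (0 : ℝ) 1)
    (R Rt : Ω → ℝ≥0∞) (hR : Measurable R) (hRt : Measurable Rt)
    (h : ∀ t : ℝ, 0 ≤ t →
      (μ {ω | R ω ≤ ENNReal.ofReal t}).toReal
        = α * ∫ u in (0 : ℝ)..t,
            (1 - (μ {ω | Rt ω ≤ ENNReal.ofReal u}).toReal) * (t - u) ^ (α - 1)) :
    ∀ s : ℝ, 0 < s →
      laplaceENN μ R s = (Real.Gamma (1 + α) / s ^ α) * (1 - laplaceENN μ Rt s) := by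
  obtain ⟨hα0, hα1⟩ := hα
  intro s hs
  set G : ℝ → ℝ := fun u => (μ {ω | Rt ω ≤ ENNReal.ofReal u}).toReal with hG_def
  have hGmono : Monotone G := by
    intro u v huv
    refine ENNReal.toReal_mono (measure_ne_top μ _) ?_
    exact measure_mono (fun ω hω => le_trans hω (ENNReal.ofReal_le_ofReal huv))
  have hGmeas : Measurable G := hGmono.measurable
  have hG0 : ∀ u, 0 ≤ G u := fun u => ENNReal.toReal_nonneg
  have hG1 : ∀ u, G u ≤ 1 := by
    intro u
    rw [hG_def]
    refine ENNReal.toReal_le_of_le_ofReal zero_le_one ?_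
    simpa using (prob_le_one (μ := μ))
  -- per-t formula in lintegral form
  have hform : ∀ t : ℝ, 0 < t → μ {ω | R ω ≤ ENNReal.ofReal t}
      = ∫⁻ u in Ioo (0:ℝ) t, ENNReal.ofReal (α * ((1 - G u) * (t - u) ^ (α - 1))) := by
    intro t ht
    have h1 : IntervalIntegrable (fun x : ℝ => x ^ (α - 1)) volume 0 t :=
      intervalIntegral.intervalIntegrable_rpow' (by linarith)
    have h3 : IntervalIntegrable (fun x : ℝ => (t - x) ^ (α - 1)) volume 0 t := by
      simpa using (h1.comp_sub_left t).symm
    have h4 : IntegrableOn (fun x : ℝ => (t - x) ^ (α - 1)) (Ioc 0 t) :=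
      (intervalIntegrable_iff_integrableOn_Ioc_of_le ht.le).1 h3
    have hIcc : IntegrableOn (fun u => (1 - G u) * (t - u) ^ (α - 1)) (Ioc 0 t) := by
      refine Integrable.bdd_mul (c := 1) h4 ((measurable_const.sub hGmeas).aestronglyMeasurable) ?_
      refine Filter.Eventually.of_forall (fun u => ?_)
      rw [Real.norm_eq_abs]
      exact abs_le.2 ⟨by linarith [hG1 u], by linarith [hG0 u]⟩
    have key := h t ht.le
    rw [intervalIntegral.integral_of_le ht.le, integral_Ioc_eq_integral_Ioo] at key
    have hnn : 0 ≤ᵐ[volume.restrict (Ioo (0:ℝ) t)]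
        fun u => (1 - G u) * (t - u) ^ (α - 1) := by
      filter_upwards [self_mem_ae_restrict measurableSet_Ioo] with u hu
      have h5 : u < t := hu.2
      have := hG1 u
      have h6 : (0:ℝ) ≤ (t - u) ^ (α - 1) := Real.rpow_nonneg (by linarith) _
      simpa using mul_nonneg (by linarith : (0:ℝ) ≤ 1 - G u) h6
    have hLi : ENNReal.ofReal (∫ u in Ioo (0:ℝ) t, (1 - G u) * (t - u) ^ (α - 1))
        = ∫⁻ u in Ioo (0:ℝ) t, ENNReal.ofReal ((1 - G u) * (t - u) ^ (α - 1)) :=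
      ofReal_integral_eq_lintegral_ofReal (hIcc.mono_set Ioo_subset_Ioc_self) hnn
    calc μ {ω | R ω ≤ ENNReal.ofReal t}
        = ENNReal.ofReal ((μ {ω | R ω ≤ ENNReal.ofReal t}).toReal) :=
          (ENNReal.ofReal_toReal (measure_ne_top μ _)).symm
      _ = ENNReal.ofReal (α * ∫ u in Ioo (0:ℝ) t, (1 - G u) * (t - u) ^ (α - 1)) := by
          rw [key]
      _ = ENNReal.ofReal α * ∫⁻ u in Ioo (0:ℝ) t,
            ENNReal.ofReal ((1 - G u) * (t - u) ^ (α - 1)) := by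
          rw [ENNReal.ofReal_mul hα0.le, hLi]
      _ = ∫⁻ u in Ioo (0:ℝ) t, ENNReal.ofReal (α * ((1 - G u) * (t - u) ^ (α - 1))) := by
          rw [← lintegral_const_mul' _ _ ENNReal.ofReal_ne_top]
          exact lintegral_congr fun u => (ENNReal.ofReal_mul hα0.le).symm
  -- main chain
  set w : ℝ → ℝ≥0∞ := fun t => ENNReal.ofReal (s * Real.exp (-(s * t))) with hw_def
  set B : Set (ℝ × ℝ) := {p | 0 < p.2 ∧ p.2 < p.1} with hB_def
  have hB : MeasurableSet B := by
    have : B = {p : ℝ × ℝ | 0 < p.2} ∩ {p | p.2 < p.1} := rfl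
    rw [this]
    exact (measurableSet_lt measurable_const measurable_snd).inter
      (measurableSet_lt measurable_snd measurable_fst)
  set H : ℝ × ℝ → ℝ≥0∞ :=
    fun p => w p.1 * ENNReal.ofReal (α * ((1 - G p.2) * (p.1 - p.2) ^ (α - 1))) with hH_def
  have hH : Measurable H := by
    apply Measurable.fun_mul
    · fun_prop
    · apply Measurable.ennreal_ofReal
      apply Measurable.const_mul
      apply Measurable.fun_mul
      · exact measurable_const.sub (hGmeas.comp measurable_snd)
      · fun_prop
  have step1 : ∀ t ∈ Ioi (0:ℝ), w t * μ {ω | R ω ≤ ENNReal.ofReal t}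
      = ∫⁻ u, B.indicator H (t, u) := by
    intro t ht
    have h1 : ∀ u : ℝ, B.indicator H (t, u)
        = (Ioo (0:ℝ) t).indicator (fun u => H (t, u)) u := by
      intro u
      by_cases hm : u ∈ Ioo (0:ℝ) t
      · rw [Set.indicator_of_mem (show (t,u) ∈ B from ⟨hm.1, hm.2⟩),
          Set.indicator_of_mem hm]
      · rw [Set.indicator_of_notMem (show (t,u) ∉ B from fun hb => hm ⟨hb.1, hb.2⟩),
          Set.indicator_of_notMem hm]
    calc w t * μ {ω | R ω ≤ ENNReal.ofReal t}
        = w t * ∫⁻ u in Ioo (0:ℝ) t,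
            ENNReal.ofReal (α * ((1 - G u) * (t - u) ^ (α - 1))) := by rw [hform t ht]
      _ = ∫⁻ u in Ioo (0:ℝ) t, H (t, u) :=
          (lintegral_const_mul' _ _ ENNReal.ofReal_ne_top).symm
      _ = ∫⁻ u, (Ioo (0:ℝ) t).indicator (fun u => H (t, u)) u :=
          (lintegral_indicator measurableSet_Ioo _).symm
      _ = ∫⁻ u, B.indicator H (t, u) := (lintegral_congr fun u => h1 u).symm
  have hswap : ∫⁻ t in Ioi (0:ℝ), (∫⁻ u, B.indicator H (t, u))
      = ∫⁻ u, (∫⁻ t in Ioi (0:ℝ), B.indicator H (t, u)) := by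
    refine lintegral_lintegral_swap ?_
    have : Function.uncurry (fun t u => B.indicator H (t, u)) = B.indicator H := rfl
    rw [this]
    exact (hH.indicator hB).aemeasurable
  set C0 : ℝ≥0∞ := ENNReal.ofReal (α * ((1/s)^α * Real.Gamma α)) with hC0
  have step2 : ∀ u : ℝ, (∫⁻ t in Ioi (0:ℝ), B.indicator H (t, u))
      = (Ioi (0:ℝ)).indicator
          (fun u => C0 * (w u * ENNReal.ofReal (1 - G u))) u := by
    intro u
    by_cases hu : 0 < u
    · rw [Set.indicator_of_mem (show u ∈ Ioi (0:ℝ) from hu)]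
      have h1 : ∀ t : ℝ, B.indicator H (t, u)
          = (Ioi u).indicator (fun t => H (t, u)) t := by
        intro t
        by_cases hm : u < t
        · rw [Set.indicator_of_mem (show (t,u) ∈ B from ⟨hu, hm⟩),
            Set.indicator_of_mem (show t ∈ Ioi u from hm)]
        · rw [Set.indicator_of_notMem (show (t,u) ∉ B from fun hb => hm hb.2),
            Set.indicator_of_notMem (show t ∉ Ioi u from hm)]
      calc ∫⁻ t in Ioi (0:ℝ), B.indicator H (t, u)
          = ∫⁻ t in Ioi (0:ℝ), (Ioi u).indicator (fun t => H (t, u)) t :=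
            lintegral_congr fun t => h1 t
        _ = ∫⁻ t in Ioi u ∩ Ioi (0:ℝ), H (t, u) := by
            rw [lintegral_indicator measurableSet_Ioi,
              Measure.restrict_restrict measurableSet_Ioi]
        _ = ∫⁻ t in Ioi u, H (t, u) := by
            have he : Ioi u ∩ Ioi (0:ℝ) = Ioi u :=
              Set.inter_eq_left.2 (fun x hx => lt_trans hu hx)
            rw [he]
        _ = ∫⁻ t in Ioi u, (ENNReal.ofReal s * ENNReal.ofReal α * ENNReal.ofReal (1 - G u))
              * ENNReal.ofReal (Real.exp (-(s*t)) * (t - u) ^ (α - 1)) := by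
            refine setLIntegral_congr_fun measurableSet_Ioi
              (fun t htu => ?_)
            show w t * ENNReal.ofReal (α * ((1 - G u) * (t - u) ^ (α - 1))) = _
            rw [hw_def]
            simp only
            rw [ENNReal.ofReal_mul hs.le, ENNReal.ofReal_mul hα0.le,
              ENNReal.ofReal_mul (by linarith [hG1 u] : (0:ℝ) ≤ 1 - G u),
              ENNReal.ofReal_mul (Real.exp_pos _).le]
            ring
        _ = (ENNReal.ofReal s * ENNReal.ofReal α * ENNReal.ofReal (1 - G u))
              * (ENNReal.ofReal (Real.exp (-(s*u)))
                * ENNReal.ofReal ((1/s)^α * Real.Gamma α)) := by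
            rw [lintegral_const_mul' _ _
              (by exact ENNReal.mul_ne_top (ENNReal.mul_ne_top ENNReal.ofReal_ne_top
                ENNReal.ofReal_ne_top) ENNReal.ofReal_ne_top),
              lint_shift hα0 hs u]
        _ = C0 * (w u * ENNReal.ofReal (1 - G u)) := by
            rw [hC0, hw_def]
            simp only
            rw [ENNReal.ofReal_mul hα0.le, ENNReal.ofReal_mul hs.le]
            ring
    · rw [Set.indicator_of_notMem (show u ∉ Ioi (0:ℝ) from hu)]
      have h1 : ∀ t : ℝ, B.indicator H (t, u) = 0 := fun t =>
        Set.indicator_of_notMem (fun hb => hu hb.1) _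
      simp [h1]
  have step3 : ENNReal.ofReal (laplaceENN μ R s)
      = C0 * ∫⁻ u in Ioi (0:ℝ), w u * ENNReal.ofReal (1 - G u) := by
    calc ENNReal.ofReal (laplaceENN μ R s)
        = ∫⁻ t in Ioi (0:ℝ), w t * μ {ω | R ω ≤ ENNReal.ofReal t} := layer μ hR hs
      _ = ∫⁻ t in Ioi (0:ℝ), (∫⁻ u, B.indicator H (t, u)) :=
          setLIntegral_congr_fun measurableSet_Ioi step1
      _ = ∫⁻ u, (∫⁻ t in Ioi (0:ℝ), B.indicator H (t, u)) := hswap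
      _ = ∫⁻ u, (Ioi (0:ℝ)).indicator
            (fun u => C0 * (w u * ENNReal.ofReal (1 - G u))) u := lintegral_congr step2
      _ = ∫⁻ u in Ioi (0:ℝ), C0 * (w u * ENNReal.ofReal (1 - G u)) :=
          lintegral_indicator measurableSet_Ioi _
      _ = C0 * ∫⁻ u in Ioi (0:ℝ), w u * ENNReal.ofReal (1 - G u) :=
          lintegral_const_mul' _ _ ENNReal.ofReal_ne_top
  have hJ : (∫⁻ u in Ioi (0:ℝ), w u * ENNReal.ofReal (1 - G u))
      + ENNReal.ofReal (laplaceENN μ Rt s) = 1 := by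
    rw [layer μ hRt hs]
    have hmeas : Measurable fun u : ℝ => w u * ENNReal.ofReal (1 - G u) := by
      apply Measurable.fun_mul
      · fun_prop
      · exact (measurable_const.sub hGmeas).ennreal_ofReal
    rw [← lintegral_add_left hmeas]
    have hpt : ∀ u : ℝ, w u * ENNReal.ofReal (1 - G u)
        + w u * μ {ω | Rt ω ≤ ENNReal.ofReal u} = w u := by
      intro u
      have h2 : ENNReal.ofReal (1 - G u) + μ {ω | Rt ω ≤ ENNReal.ofReal u} = 1 := by
        conv_lhs => rw [← ENNReal.ofReal_toReal
          (measure_ne_top μ {ω | Rt ω ≤ ENNReal.ofReal u})]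
        rw [← ENNReal.ofReal_add (by linarith [hG1 u] : (0:ℝ) ≤ 1 - G u)
          ENNReal.toReal_nonneg]
        norm_num
        exact sub_add_cancel 1 (G u)
      rw [← mul_add, h2, mul_one]
    rw [lintegral_congr hpt]
    have := lint_exp_tail hs 0
    rw [hw_def]
    simp only
    rw [this]
    norm_num
  have hJval : (∫⁻ u in Ioi (0:ℝ), w u * ENNReal.ofReal (1 - G u))
      = ENNReal.ofReal (1 - laplaceENN μ Rt s) := by
    rw [ENNReal.eq_sub_of_add_eq ENNReal.ofReal_ne_top hJ,
      ENNReal.ofReal_sub _ (laplace_nonneg μ Rt s), ENNReal.ofReal_one]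
  have hmain : ENNReal.ofReal (laplaceENN μ R s)
      = ENNReal.ofReal ((α * ((1/s)^α * Real.Gamma α)) * (1 - laplaceENN μ Rt s)) := by
    rw [step3, hJval, hC0, ← ENNReal.ofReal_mul (by positivity)]
  have hreal := (ENNReal.ofReal_eq_ofReal_iff (laplace_nonneg μ R s)
    (mul_nonneg (by positivity) (by linarith [laplace_le_one μ hRt hs]))).1 hmain
  rw [hreal]
  have hsα : (0:ℝ) < s ^ α := Real.rpow_pos_of_pos hs α
  have hgamma : Real.Gamma (1 + α) = α * Real.Gamma α := by
    rw [add_comm, Real.Gamma_add_one hα0.ne']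
  rw [hgamma, Real.div_rpow zero_le_one hs.le, Real.one_rpow]
  field_simp
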